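/- Let K be a field of characteristic 0, G a group acting on a K-algebra A by automorphisms with A finite-dimensional semisimple over K, and suppose A carries a G-grading compatible with the G-action (a Yetter–Drinfeld structure over an abelian group G). Then the multiplication map A ⊗_K A → A admits a bimodule splitting given by a separability idempotent e' that is homogeneous of degree 0 with respect to the grading. -/

import Mathlib

set_option linter.unusedSectionVars false
set_option maxHeartbeats 1000000

open scoped TensorProduct
open LinearMap

section Sep
variable (K : Type*) [Field K] [CharZero K]
variable (A : Type*) [Ring A] [Algebra K A] [FiniteDimensional K A] [IsSemisimpleRing A]

lemma end_idem_trace_zero (f : Module.End K A) (hf : f ∘ₗ f = f)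
    (h : LinearMap.trace K A f = 0) : f = 0 := by
  have hproj : LinearMap.IsProj (LinearMap.range f) f := by
    refine ⟨fun x => LinearMap.mem_range_self f x, ?_⟩
    rintro x ⟨y, rfl⟩
    exact congrFun (congrArg DFunLike.coe hf) y
  have htr := hproj.trace
  rw [h] at htr
  have : Module.finrank K (LinearMap.range f) = 0 := by exact_mod_cast htr.symm
  rw [← LinearMap.range_eq_bot, ← Submodule.finrank_eq_zero]
  exact this

lemma exists_right_unit (I : Submodule A A) :
    ∃ e ∈ I, ∀ x ∈ I, x * e = x := by
  obtain ⟨J, hJ⟩ := exists_isCompl I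
  set π := I.linearProjOfIsCompl J hJ with hπ
  refine ⟨(π 1 : A), (π 1).2, fun x hx => ?_⟩
  have h1 : π (x • (1 : A)) = x • π 1 := map_smul π x 1
  have h2 : π x = ⟨x, hx⟩ := Submodule.linearProjOfIsCompl_apply_left hJ ⟨x, hx⟩
  rw [smul_eq_mul, mul_one, h2] at h1
  have := congrArg (Subtype.val) h1
  simpa [smul_eq_mul] using this.symm

lemma tl_comm (u v : A) :
    LinearMap.trace K A (mulLeft K (u * v)) = LinearMap.trace K A (mulLeft K (v * u)) := by
  rw [mulLeft_mul, mulLeft_mul, ← Module.End.mul_eq_comp, ← Module.End.mul_eq_comp,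
    LinearMap.trace_mul_comm]

lemma tr_comm (u v : A) :
    LinearMap.trace K A (mulRight K (u * v)) = LinearMap.trace K A (mulRight K (v * u)) := by
  rw [mulRight_mul, mulRight_mul, ← Module.End.mul_eq_comp, ← Module.End.mul_eq_comp,
    LinearMap.trace_mul_comm]

lemma nondegL (x : A) (hx : ∀ y, LinearMap.trace K A (mulLeft K (x * y)) = 0) : x = 0 := by
  have hadd : ∀ a b : A, mulLeft K (a + b) = mulLeft K a + mulLeft K b :=
    fun a b => LinearMap.ext fun y => add_mul a b y
  set I : Submodule A A :=
    { carrier := {x | ∀ y, LinearMap.trace K A (mulLeft K (x * y)) = 0}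
      add_mem' := by
        intro a b ha hb y
        rw [add_mul, hadd, map_add, ha y, hb y, add_zero]
      zero_mem' := by
        intro y
        rw [zero_mul, mulLeft_zero_eq_zero, map_zero]
      smul_mem' := by
        intro c x hx y
        have : c • x * y = c * (x * y) := by rw [smul_eq_mul, mul_assoc]
        rw [this, tl_comm K A, mul_assoc]
        exact hx (y * c) } with hI
  obtain ⟨e, heI, he⟩ := exists_right_unit A I
  have he2 : e * e = e := he e heI
  have hetr : LinearMap.trace K A (mulLeft K e) = 0 := by
    have := heI 1
    rwa [mul_one] at this
  have : mulLeft K e = 0 := by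
    refine end_idem_trace_zero K A _ ?_ hetr
    rw [← mulLeft_mul, he2]
  have he0 : e = 0 := by
    have := congrFun (congrArg DFunLike.coe this) 1
    simpa using this
  have := he x hx
  rw [he0, mul_zero] at this
  exact this.symm

lemma nondegR (x : A) (hx : ∀ y, LinearMap.trace K A (mulRight K (x * y)) = 0) : x = 0 := by
  have hadd : ∀ a b : A, mulRight K (a + b) = mulRight K a + mulRight K b :=
    fun a b => LinearMap.ext fun y => mul_add y a b
  set I : Submodule A A :=
    { carrier := {x | ∀ y, LinearMap.trace K A (mulRight K (x * y)) = 0}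
      add_mem' := by
        intro a b ha hb y
        rw [add_mul, hadd, map_add, ha y, hb y, add_zero]
      zero_mem' := by
        intro y
        have : mulRight K (0 : A) = 0 := LinearMap.ext fun y => mul_zero y
        rw [zero_mul, this, map_zero]
      smul_mem' := by
        intro c x hx y
        have : c • x * y = c * (x * y) := by rw [smul_eq_mul, mul_assoc]
        rw [this, tr_comm K A, mul_assoc]
        exact hx (y * c) } with hI
  obtain ⟨e, heI, he⟩ := exists_right_unit A I
  have he2 : e * e = e := he e heI
  have hetr : LinearMap.trace K A (mulRight K e) = 0 := by
    have := heI 1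
    rwa [mul_one] at this
  have : mulRight K e = 0 := by
    refine end_idem_trace_zero K A _ ?_ ?_
    · rw [← mulRight_mul, he2]
    · exact hetr
  have he0 : e = 0 := by
    have := congrFun (congrArg DFunLike.coe this) 1
    simpa using this
  have := he x hx
  rw [he0, mul_zero] at this
  exact this.symm


noncomputable def Bf : LinearMap.BilinForm K A :=
  (LinearMap.mul K A).compr₂ ((LinearMap.trace K A) ∘ₗ (LinearMap.mul K A))

lemma Bf_apply (x y : A) : Bf K A x y = LinearMap.trace K A (mulLeft K (x * y)) := rfl

lemma Bf_nondeg : (Bf K A).Nondegenerate := ⟨fun x hx => nondegL K A x fun y => hx y,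
  fun y hy => nondegL K A y fun x => by rw [tl_comm K A]; exact hy x⟩

lemma Bf_assoc (a u v : A) : Bf K A (a * u) v = Bf K A u (v * a) := by
  rw [Bf_apply, Bf_apply, mul_assoc, tl_comm, mul_assoc]

noncomputable def bb : Module.Basis (Fin (Module.finrank K A)) K A := Module.finBasis K A

noncomputable def db : Module.Basis (Fin (Module.finrank K A)) K A :=
  (Bf K A).dualBasis (Bf_nondeg K A) (bb K A)

lemma db_pair (i j : Fin (Module.finrank K A)) :
    Bf K A (db K A i) (bb K A j) = if j = i then 1 else 0 :=
  LinearMap.BilinForm.apply_dualBasis_left _ _ _ _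

lemma expandL (x : A) : x = ∑ j, Bf K A x (bb K A j) • db K A j := by
  conv_lhs => rw [← (db K A).sum_repr x]
  refine Finset.sum_congr rfl fun j _ => ?_
  exact congrArg (· • db K A j)
    (LinearMap.BilinForm.dualBasis_repr_apply (B := Bf K A) (Bf_nondeg K A) (bb K A) x j)

lemma repr_eq (x : A) (j : Fin (Module.finrank K A)) :
    (bb K A).repr x j = Bf K A (db K A j) x := by
  conv_rhs => rw [← (bb K A).sum_repr x]
  rw [map_sum]
  simp only [map_smul, db_pair, smul_eq_mul, mul_ite, mul_one, mul_zero]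
  simp

lemma expandR (x : A) : x = ∑ j, Bf K A (db K A j) x • bb K A j := by
  conv_lhs => rw [← (bb K A).sum_repr x]
  refine Finset.sum_congr rfl fun j _ => ?_
  rw [repr_eq]

noncomputable def cas : A ⊗[K] A := ∑ i, (db K A i) ⊗ₜ[K] (bb K A i)

lemma cas_comm (a : A) :
    (a ⊗ₜ[K] (1 : A)) * cas K A = cas K A * ((1 : A) ⊗ₜ[K] a) := by
  rw [cas, Finset.mul_sum, Finset.sum_mul]
  simp only [Algebra.TensorProduct.tmul_mul_tmul, one_mul, mul_one]
  calc ∑ i, (a * db K A i) ⊗ₜ[K] (bb K A i)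
      = ∑ i, ∑ j, Bf K A (db K A i) (bb K A j * a) • (db K A j ⊗ₜ[K] bb K A i) := by
        refine Finset.sum_congr rfl fun i _ => ?_
        conv_lhs => rw [expandL K A (a * db K A i)]
        rw [TensorProduct.sum_tmul]
        refine Finset.sum_congr rfl fun j _ => ?_
        rw [TensorProduct.smul_tmul', Bf_assoc]
    _ = ∑ j, ∑ i, Bf K A (db K A i) (bb K A j * a) • (db K A j ⊗ₜ[K] bb K A i) :=
        Finset.sum_comm
    _ = ∑ j, db K A j ⊗ₜ[K] (bb K A j * a) := by
        refine Finset.sum_congr rfl fun j _ => ?_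
        conv_rhs => rw [expandR K A (bb K A j * a)]
        rw [TensorProduct.tmul_sum]
        refine Finset.sum_congr rfl fun i _ => ?_
        rw [TensorProduct.tmul_smul]

noncomputable def zc : A := ∑ i, db K A i * bb K A i

lemma mul'_cas : LinearMap.mul' K A (cas K A) = zc K A := by
  rw [cas, zc, map_sum]
  exact Finset.sum_congr rfl fun i _ => LinearMap.mul'_apply

lemma mul'_left (a : A) : LinearMap.mul' K A ((a ⊗ₜ[K] (1:A)) * cas K A) = a * zc K A := by
  rw [cas, zc, Finset.mul_sum, map_sum, Finset.mul_sum]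
  refine Finset.sum_congr rfl fun i _ => ?_
  rw [Algebra.TensorProduct.tmul_mul_tmul, LinearMap.mul'_apply, one_mul, mul_assoc]

lemma mul'_right (a : A) : LinearMap.mul' K A (cas K A * ((1:A) ⊗ₜ[K] a)) = zc K A * a := by
  rw [cas, zc, Finset.sum_mul, map_sum, Finset.sum_mul]
  refine Finset.sum_congr rfl fun i _ => ?_
  rw [Algebra.TensorProduct.tmul_mul_tmul, LinearMap.mul'_apply, mul_one, mul_assoc]

lemma zc_central (a : A) : a * zc K A = zc K A * a := by
  rw [← mul'_left, ← mul'_right, cas_comm]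

lemma trace_zc_mul (x : A) :
    LinearMap.trace K A (mulLeft K (zc K A * x)) = LinearMap.trace K A (mulRight K x) := by
  have key : ∀ s : A, LinearMap.trace K A (mulLeft K s)
      = ((LinearMap.trace K A) ∘ₗ (LinearMap.mul K A)) s := fun _ => rfl
  rw [key, zc, Finset.sum_mul, map_sum]
  simp only [← key]
  rw [LinearMap.trace_eq_matrix_trace K (bb K A), Matrix.trace]
  simp only [Matrix.diag_apply, LinearMap.toMatrix_apply, mulRight_apply]
  refine Finset.sum_congr rfl fun i _ => ?_
  rw [mul_assoc, ← Bf_apply, ← repr_eq]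

lemma exists_inv : ∃ w : A, zc K A * w = 1 := by
  have hinj : Function.Injective (mulLeft K (zc K A)) := by
    rw [← LinearMap.ker_eq_bot, LinearMap.ker_eq_bot']
    intro x hx
    simp only [mulLeft_apply] at hx
    refine nondegR K A x fun y => ?_
    rw [← trace_zc_mul, ← mul_assoc, hx, zero_mul, mulLeft_zero_eq_zero, map_zero]
  have hsurj : Function.Surjective (mulLeft K (zc K A)) :=
    (LinearMap.injective_iff_surjective).mp hinj
  obtain ⟨w, hw⟩ := hsurj 1
  exact ⟨w, hw⟩

/-- Existence of a separability idempotent. -/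
theorem exists_sep : ∃ e : A ⊗[K] A, LinearMap.mul' K A e = 1 ∧
    ∀ a : A, (a ⊗ₜ[K] (1 : A)) * e = e * ((1 : A) ⊗ₜ[K] a) := by
  obtain ⟨w, hw⟩ := exists_inv K A
  have hwz : w * zc K A = 1 := by rw [zc_central K A w]; exact hw
  have hwc : ∀ a : A, a * w = w * a := by
    intro a
    calc a * w = (w * zc K A) * (a * w) := by rw [hwz, one_mul]
      _ = w * (zc K A * a) * w := by rw [mul_assoc, mul_assoc, mul_assoc]
      _ = w * (a * zc K A) * w := by rw [zc_central]
      _ = (w * a) * (zc K A * w) := by rw [mul_assoc, mul_assoc, mul_assoc]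
      _ = w * a := by rw [hw, mul_one]
  refine ⟨(w ⊗ₜ[K] (1 : A)) * cas K A, ?_, ?_⟩
  · have : (w ⊗ₜ[K] (1:A)) * cas K A = ∑ i, (w * db K A i) ⊗ₜ[K] (bb K A i) := by
      rw [cas, Finset.mul_sum]
      simp [Algebra.TensorProduct.tmul_mul_tmul]
    rw [this, map_sum]
    simp only [LinearMap.mul'_apply]
    calc ∑ i, w * db K A i * bb K A i = w * ∑ i, db K A i * bb K A i := by
          rw [Finset.mul_sum]; simp [mul_assoc]
      _ = 1 := by rw [← zc, hwz]
  · intro a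
    calc (a ⊗ₜ[K] (1:A)) * ((w ⊗ₜ[K] (1:A)) * cas K A)
        = ((a * w) ⊗ₜ[K] (1:A)) * cas K A := by
          rw [← mul_assoc, Algebra.TensorProduct.tmul_mul_tmul, mul_one]
      _ = ((w * a) ⊗ₜ[K] (1:A)) * cas K A := by rw [hwc]
      _ = (w ⊗ₜ[K] (1:A)) * ((a ⊗ₜ[K] (1:A)) * cas K A) := by
          rw [← mul_assoc, Algebra.TensorProduct.tmul_mul_tmul, mul_one]
      _ = (w ⊗ₜ[K] (1:A)) * (cas K A * ((1:A) ⊗ₜ[K] a)) := by rw [cas_comm]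
      _ = ((w ⊗ₜ[K] (1:A)) * cas K A) * ((1:A) ⊗ₜ[K] a) := by rw [mul_assoc]


end Sep

section Grad
variable {K : Type*} [Field K]
variable {G : Type*} [AddCommGroup G] [Fintype G] [DecidableEq G]
variable {A : Type*} [Ring A] [Algebra K A]
variable (𝒜 : G → Submodule K A) [GradedAlgebra 𝒜]

/-- The projection onto the `g`-component, valued in the submodule. -/
noncomputable def qj (g : G) : A →ₗ[K] 𝒜 g :=
  (DirectSum.component K G (fun i => 𝒜 i) g) ∘ₗ (DirectSum.decomposeLinearEquiv 𝒜).toLinearMap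

/-- The projection onto the `g`-component, as an endomorphism of `A`. -/
noncomputable def pj (g : G) : A →ₗ[K] A := (𝒜 g).subtype ∘ₗ qj 𝒜 g

lemma pj_apply (g : G) (a : A) : pj 𝒜 g a = (DirectSum.decompose 𝒜 a g : A) := rfl

lemma pj_mem (g : G) (a : A) : pj 𝒜 g a ∈ 𝒜 g := (DirectSum.decompose 𝒜 a g).2

lemma pj_same {i : G} {x : A} (hx : x ∈ 𝒜 i) : pj 𝒜 i x = x := by
  rw [pj_apply]; exact DirectSum.decompose_of_mem_same 𝒜 hx

lemma pj_ne {i g : G} {x : A} (hx : x ∈ 𝒜 i) (h : i ≠ g) : pj 𝒜 g x = 0 := by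
  rw [pj_apply]; exact DirectSum.decompose_of_mem_ne 𝒜 hx h

lemma sum_pj (a : A) : ∑ g : G, pj 𝒜 g a = a := by
  classical
  conv_rhs => rw [← DirectSum.sum_support_decompose 𝒜 a]
  refine (Finset.sum_subset (Finset.subset_univ _) fun g _ hg => ?_).symm
  rw [pj_apply, DFinsupp.notMem_support_iff.mp hg, ZeroMemClass.coe_zero]

lemma pj_mul_left {a : A} {d : G} (ha : a ∈ 𝒜 d) (g : G) (x : A) :
    pj 𝒜 g (a * x) = a * pj 𝒜 (g - d) x := by
  conv_lhs => rw [← sum_pj 𝒜 x]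
  rw [Finset.mul_sum, map_sum, Finset.sum_eq_single (g - d)]
  · have hm : a * pj 𝒜 (g - d) x ∈ 𝒜 g := by
      have h1 := SetLike.GradedMul.mul_mem ha (pj_mem 𝒜 (g - d) x)
      have h2 : d + (g - d) = g := by abel
      rwa [h2] at h1
    exact pj_same 𝒜 hm
  · intro i _ hig
    have hm : a * pj 𝒜 i x ∈ 𝒜 (d + i) := SetLike.GradedMul.mul_mem ha (pj_mem 𝒜 i x)
    exact pj_ne 𝒜 hm fun hc => hig (by rw [← hc]; abel)
  · intro h; exact absurd (Finset.mem_univ _) h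

lemma pj_mul_right {a : A} {d : G} (ha : a ∈ 𝒜 d) (g : G) (x : A) :
    pj 𝒜 g (x * a) = pj 𝒜 (g - d) x * a := by
  conv_lhs => rw [← sum_pj 𝒜 x]
  rw [Finset.sum_mul, map_sum, Finset.sum_eq_single (g - d)]
  · have hm : pj 𝒜 (g - d) x * a ∈ 𝒜 g := by
      have h1 := SetLike.GradedMul.mul_mem (pj_mem 𝒜 (g - d) x) ha
      have h2 : g - d + d = g := by abel
      rwa [h2] at h1
    exact pj_same 𝒜 hm
  · intro i _ hig
    have hm : pj 𝒜 i x * a ∈ 𝒜 (i + d) := SetLike.GradedMul.mul_mem (pj_mem 𝒜 i x) ha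
    exact pj_ne 𝒜 hm fun hc => hig (by rw [← hc]; abel)
  · intro h; exact absurd (Finset.mem_univ _) h

lemma mulE (z : A ⊗[K] A) :
    LinearMap.mul' K A (∑ g : G, TensorProduct.map (pj 𝒜 g) (pj 𝒜 (-g)) z)
      = pj 𝒜 0 (LinearMap.mul' K A z) := by
  induction z using TensorProduct.induction_on with
  | zero => simp
  | tmul x y =>
      simp only [TensorProduct.map_tmul, map_sum, LinearMap.mul'_apply]
      conv_rhs => rw [← sum_pj 𝒜 x, Finset.sum_mul, map_sum]
      refine Finset.sum_congr rfl fun g _ => ?_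
      rw [pj_mul_left 𝒜 (pj_mem 𝒜 g x) 0 y, zero_sub]
  | add u v hu hv =>
      simp only [map_add, Finset.sum_add_distrib] at *
      rw [hu, hv]

lemma commL {a : A} {d : G} (ha : a ∈ 𝒜 d) (z : A ⊗[K] A) :
    (a ⊗ₜ[K] (1 : A)) * (∑ g : G, TensorProduct.map (pj 𝒜 g) (pj 𝒜 (-g)) z)
      = ∑ g : G, TensorProduct.map (pj 𝒜 g) (pj 𝒜 (d - g)) ((a ⊗ₜ[K] (1 : A)) * z) := by
  induction z using TensorProduct.induction_on with
  | zero => simp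
  | tmul x y =>
      simp only [TensorProduct.map_tmul, Algebra.TensorProduct.tmul_mul_tmul, one_mul,
        Finset.mul_sum]
      refine Fintype.sum_equiv (Equiv.addRight d) _ _ fun h => ?_
      simp only [Algebra.TensorProduct.tmul_mul_tmul, one_mul, Equiv.coe_addRight]
      rw [pj_mul_left 𝒜 ha (h + d) x]
      have h1 : h + d - d = h := by abel
      have h2 : d - (h + d) = -h := by abel
      rw [h1, h2]
  | add u v hu hv =>
      simp only [map_add, mul_add, Finset.sum_add_distrib] at *
      rw [hu, hv]

lemma commR {a : A} {d : G} (ha : a ∈ 𝒜 d) (z : A ⊗[K] A) :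
    (∑ g : G, TensorProduct.map (pj 𝒜 g) (pj 𝒜 (-g)) z) * ((1 : A) ⊗ₜ[K] a)
      = ∑ g : G, TensorProduct.map (pj 𝒜 g) (pj 𝒜 (d - g)) (z * ((1 : A) ⊗ₜ[K] a)) := by
  induction z using TensorProduct.induction_on with
  | zero => simp
  | tmul x y =>
      simp only [TensorProduct.map_tmul, Algebra.TensorProduct.tmul_mul_tmul, mul_one,
        Finset.sum_mul]
      refine Finset.sum_congr rfl fun g _ => ?_
      rw [pj_mul_right 𝒜 ha (d - g) y]
      have h1 : d - g - d = -g := by abel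
      rw [h1]
  | add u v hu hv =>
      simp only [map_add, add_mul, Finset.sum_add_distrib] at *
      rw [hu, hv]

end Grad


open Algebra.TensorProduct in
/-- Let `K` be a field of characteristic 0, `G` a finite abelian group, and `A` a
finite-dimensional semisimple `K`-algebra equipped with a `G`-grading (encoding the
Yetter–Drinfeld structure, i.e. the compatible action and grading, via the combined
`G × G^∨`-grading).  Then the multiplication map `A ⊗_K A → A` admits a bimodule splitting
determined by a separability idempotent `e'` which is homogeneous of degree `0`:
`m(e') = 1`, `a·e' = e'·a` for all `a ∈ A`, and `e' ∈ Σ_g A_g ⊗ A_{-g}`. -/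
theorem stmt9 (K : Type*) [Field K] [CharZero K]
    (G : Type*) [AddCommGroup G] [Fintype G] [DecidableEq G]
    (A : Type*) [Ring A] [Algebra K A] [FiniteDimensional K A] [IsSemisimpleRing A]
    (𝒜 : G → Submodule K A) [GradedAlgebra 𝒜] :
    ∃ e : A ⊗[K] A,
      LinearMap.mul' K A e = 1 ∧
      (∀ a : A,
        (Algebra.TensorProduct.includeLeft : A →ₐ[K] A ⊗[K] A) a * e
          = e * (Algebra.TensorProduct.includeRight : A →ₐ[K] A ⊗[K] A) a) ∧
      e ∈ ⨆ g : G, LinearMap.range (TensorProduct.map (𝒜 g).subtype (𝒜 (-g)).subtype) := by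
  obtain ⟨e0, he1, he2⟩ := exists_sep K A
  refine ⟨∑ g : G, TensorProduct.map (pj 𝒜 g) (pj 𝒜 (-g)) e0, ?_, ?_, ?_⟩
  · rw [mulE 𝒜 e0, he1]
    exact pj_same 𝒜 SetLike.GradedOne.one_mem
  · intro a
    simp only [Algebra.TensorProduct.includeLeft_apply, Algebra.TensorProduct.includeRight_apply]
    conv_lhs => rw [← sum_pj 𝒜 a, TensorProduct.sum_tmul, Finset.sum_mul]
    conv_rhs => rw [← sum_pj 𝒜 a, TensorProduct.tmul_sum, Finset.mul_sum]
    refine Finset.sum_congr rfl fun d _ => ?_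
    rw [commL 𝒜 (pj_mem 𝒜 d a) e0, commR 𝒜 (pj_mem 𝒜 d a) e0, he2 (pj 𝒜 d a)]
  · refine Submodule.sum_mem _ fun g _ => Submodule.mem_iSup_of_mem g ?_
    refine ⟨TensorProduct.map (qj 𝒜 g) (qj 𝒜 (-g)) e0, ?_⟩
    rw [← LinearMap.comp_apply, ← TensorProduct.map_comp]
    rfl
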